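/- Let G, M, R > 0 and define, for I = (P,E,Y) ∈ (0,∞)×(0,1)×ℝ and θ ∈ ℝ: ρ(I,θ) := RP/(1 + E cos(θ−Y)), W(ρ,θ) := −(GMR²/ρ³)(1 − 3cos²θ), 𝒬_ρ(I,θ) := −(∂W/∂ρ)(ρ(I,θ), θ) and 𝒬_θ(I,θ) := −(∂W/∂θ)(ρ(I,θ), θ). Then the following three identities hold for all such (I,θ): (i) (4π P² / (1 + E cos(θ−Y))²) · (R 𝒬_θ(I,θ)/(GM)) = f^P(I,θ); (ii) (2π P² sin(θ−Y)/(1 + E cos(θ−Y))²) · (R² 𝒬_ρ(I,θ)/(GM)) + π P (3E + 4cos(θ−Y) + E cos(2θ−2Y))/(1 + E cos(θ−Y))² · (R 𝒬_θ(I,θ)/(GM)) = f^E(I,θ); (iii) −(2π P² cos(θ−Y)/(E (1 + E cos(θ−Y))²)) · (R² 𝒬_ρ(I,θ)/(GM)) + (2π P sin(θ−Y)(2 + E cos(θ−Y))/(E (1 + E cos(θ−Y))²)) · (R 𝒬_θ(I,θ)/(GM)) = f^Y(I,θ), where f = (f^P, f^E, f^Y) is the J₂ polar-motion vector field given below. 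-/

import Mathlib

open Real

/-- The `P`-component of the J₂ polar-motion vector field. -/
noncomputable def fP (P E Y θ : ℝ) : ℝ :=
  (6 * π / P) * (E * sin (θ + Y) + 2 * sin (2 * θ) + E * sin (3 * θ - Y))

/-- The `E`-component of the J₂ polar-motion vector field. -/
noncomputable def fE (P E Y θ : ℝ) : ℝ :=
  (3 * π / (8 * P ^ 2)) *
    (E ^ 2 * sin (θ - 3 * Y) + (8 + 2 * E ^ 2) * sin (θ - Y) + (4 + 11 * E ^ 2) * sin (θ + Y)
      + 8 * E * sin (2 * θ - 2 * Y) + 40 * E * sin (2 * θ) + 2 * E ^ 2 * sin (3 * θ - 3 * Y)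
      + (28 + 17 * E ^ 2) * sin (3 * θ - Y) + 24 * E * sin (4 * θ - 2 * Y)
      + 5 * E ^ 2 * sin (5 * θ - 3 * Y))

/-- The `Y`-component of the J₂ polar-motion vector field. -/
noncomputable def fY (P E Y θ : ℝ) : ℝ :=
  - 3 * π / P ^ 2 - (3 * π / (8 * E * P ^ 2)) *
    (E ^ 2 * cos (θ - 3 * Y) + (8 + 6 * E ^ 2) * cos (θ - Y) - (4 - 7 * E ^ 2) * cos (θ + Y)
      + 8 * E * cos (2 * θ - 2 * Y) + 24 * E * cos (2 * θ) + 2 * E ^ 2 * cos (3 * θ - 3 * Y)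
      + (28 + 11 * E ^ 2) * cos (3 * θ - Y) + 24 * E * cos (4 * θ - 2 * Y)
      + 5 * E ^ 2 * cos (5 * θ - 3 * Y))

/-- The quadrupole perturbing potential restricted to a polar plane, in polar coordinates. -/
noncomputable def Wpot (G M R ρ θ : ℝ) : ℝ :=
  -(G * M * R ^ 2 / ρ ^ 3) * (1 - 3 * (cos θ) ^ 2)

/-- The osculating-ellipse radius. -/
noncomputable def ρel (R P E Y θ : ℝ) : ℝ := R * P / (1 + E * cos (θ - Y))

/-- Radial Lagrangian force component `𝒬_ρ = −∂W/∂ρ` evaluated on the osculating ellipse. -/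
noncomputable def Qρ (G M R P E Y θ : ℝ) : ℝ :=
  -deriv (fun r => Wpot G M R r θ) (ρel R P E Y θ)

/-- Angular Lagrangian force component `𝒬_θ = −∂W/∂θ` evaluated on the osculating ellipse. -/
noncomputable def Qθ (G M R P E Y θ : ℝ) : ℝ :=
  -deriv (fun t => Wpot G M R (ρel R P E Y θ) t) θ


lemma trigA (E Y θ : ℝ) :
    4 * sin θ * cos θ * (1 + E * cos (θ - Y))
      = E * sin (θ + Y) + 2 * sin (2 * θ) + E * sin (3 * θ - Y) := by
  rw [show (3:ℝ) * θ - Y = θ + θ + (θ - Y) by ring, show (2:ℝ) * θ = θ + θ by ring]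
  simp only [sin_add, cos_add, sin_sub, cos_sub]
  linear_combination (E*cos θ*sin Y + E*sin θ*cos Y) * sin_sq_add_cos_sq θ

lemma trigB (E Y θ : ℝ) :
    8 * (-2 * sin (θ - Y) * (1 - 3 * cos θ ^ 2) * (1 + E * cos (θ - Y)) ^ 2
        + 2 * sin θ * cos θ * (3 * E + 4 * cos (θ - Y) + E * cos (2 * θ - 2 * Y))
            * (1 + E * cos (θ - Y)))
      = E ^ 2 * sin (θ - 3 * Y) + (8 + 2 * E ^ 2) * sin (θ - Y) + (4 + 11 * E ^ 2) * sin (θ + Y)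
      + 8 * E * sin (2 * θ - 2 * Y) + 40 * E * sin (2 * θ) + 2 * E ^ 2 * sin (3 * θ - 3 * Y)
      + (28 + 17 * E ^ 2) * sin (3 * θ - Y) + 24 * E * sin (4 * θ - 2 * Y)
      + 5 * E ^ 2 * sin (5 * θ - 3 * Y) := by
  rw [show (5:ℝ) * θ - 3 * Y = θ + θ + θ + θ + θ - (Y + Y + Y) by ring,
      show (4:ℝ) * θ - 2 * Y = θ + θ + θ + θ - (Y + Y) by ring,
      show (3:ℝ) * θ - 3 * Y = θ + θ + θ - (Y + Y + Y) by ring,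
      show (3:ℝ) * θ - Y = θ + θ + θ - Y by ring,
      show (2:ℝ) * θ - 2 * Y = θ + θ - (Y + Y) by ring,
      show θ - (3:ℝ) * Y = θ - (Y + Y + Y) by ring,
      show (2:ℝ) * θ = θ + θ by ring]
  simp only [sin_add, cos_add, sin_sub, cos_sub]
  linear_combination
    ((-20)*cos θ*sin Y + (-3)*cos θ*sin Y*E^2 + (9)*cos θ*sin Y*cos Y^2*E^2
      + (13)*cos θ*sin Y^3*E^2 + (-48)*cos θ^2*sin Y*cos Y*E + (-33)*cos θ^3*sin Y*cos Y^2*E^2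
      + (-5)*cos θ^3*sin Y^3*E^2 + (28)*sin θ*cos Y + (17)*sin θ*cos Y*E^2
      + (-3)*sin θ*cos Y^3*E^2 + (-7)*sin θ*sin Y^2*cos Y*E^2 + (80)*sin θ*cos θ*cos Y^2*E
      + (-16)*sin θ*cos θ*sin Y^2*E + (39)*sin θ*cos θ^2*cos Y^3*E^2
      + (-37)*sin θ*cos θ^2*sin Y^2*cos Y*E^2 + (48)*sin θ^2*sin Y*cos Y*E
      + (59)*sin θ^2*cos θ*sin Y*cos Y^2*E^2 + (-9)*sin θ^2*cos θ*sin Y^3*E^2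
      + (-5)*sin θ^3*cos Y^3*E^2 + (15)*sin θ^3*sin Y^2*cos Y*E^2) * sin_sq_add_cos_sq θ
    + ((12)*cos θ*sin Y*E^2 + (-20)*cos θ^3*sin Y*E^2 + (-4)*sin θ*cos Y*E^2
      + (32)*sin θ*cos θ*E + (20)*sin θ*cos θ^2*cos Y*E^2) * sin_sq_add_cos_sq Y

lemma trigC (E Y θ : ℝ) :
    48 * cos (θ - Y) * (1 - 3 * cos θ ^ 2) * (1 + E * cos (θ - Y)) ^ 2
      + 48 * sin (θ - Y) * (2 + E * cos (θ - Y)) * (2 * sin θ * cos θ)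
          * (1 + E * cos (θ - Y))
      = -24 * E - 3 *
      (E ^ 2 * cos (θ - 3 * Y) + (8 + 6 * E ^ 2) * cos (θ - Y) - (4 - 7 * E ^ 2) * cos (θ + Y)
      + 8 * E * cos (2 * θ - 2 * Y) + 24 * E * cos (2 * θ) + 2 * E ^ 2 * cos (3 * θ - 3 * Y)
      + (28 + 11 * E ^ 2) * cos (3 * θ - Y) + 24 * E * cos (4 * θ - 2 * Y)
      + 5 * E ^ 2 * cos (5 * θ - 3 * Y)) := by
  rw [show (5:ℝ) * θ - 3 * Y = θ + θ + θ + θ + θ - (Y + Y + Y) by ring,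
      show (4:ℝ) * θ - 2 * Y = θ + θ + θ + θ - (Y + Y) by ring,
      show (3:ℝ) * θ - 3 * Y = θ + θ + θ - (Y + Y + Y) by ring,
      show (3:ℝ) * θ - Y = θ + θ + θ - Y by ring,
      show (2:ℝ) * θ - 2 * Y = θ + θ - (Y + Y) by ring,
      show θ - (3:ℝ) * Y = θ - (Y + Y + Y) by ring,
      show (2:ℝ) * θ = θ + θ by ring]
  simp only [sin_add, cos_add, sin_sub, cos_sub]
  linear_combination
    ((-72)*E + (48)*cos Y^2*E + (48)*sin Y^2*E + (-60)*cos θ*cos Y + (-99)*cos θ*cos Y*E^2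
      + (57)*cos θ*cos Y^3*E^2 + (69)*cos θ*sin Y^2*cos Y*E^2 + (-216)*cos θ^2*cos Y^2*E
      + (-72)*cos θ^2*sin Y^2*E + (-129)*cos θ^3*cos Y^3*E^2 + (-45)*cos θ^3*sin Y^2*cos Y*E^2
      + (-84)*sin θ*sin Y + (-33)*sin θ*sin Y*E^2 + (27)*sin θ*sin Y*cos Y^2*E^2
      + (39)*sin θ*sin Y^3*E^2 + (-288)*sin θ*cos θ*sin Y*cos Y*E
      + (-303)*sin θ*cos θ^2*sin Y*cos Y^2*E^2 + (-75)*sin θ*cos θ^2*sin Y^3*E^2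
      + (72)*sin θ^2*cos Y^2*E + (-72)*sin θ^2*sin Y^2*E + (75)*sin θ^2*cos θ*cos Y^3*E^2
      + (-129)*sin θ^2*cos θ*sin Y^2*cos Y*E^2 + (45)*sin θ^3*sin Y*cos Y^2*E^2
      + (-15)*sin θ^3*sin Y^3*E^2) * sin_sq_add_cos_sq θ
    + ((48)*E + (60)*cos θ*cos Y*E^2 + (-144)*cos θ^2*E + (-132)*cos θ^3*cos Y*E^2
      + (36)*sin θ*sin Y*E^2 + (-132)*sin θ*cos θ^2*sin Y*E^2) * sin_sq_add_cos_sq Y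

lemma opE_pos (E Y θ : ℝ) (hE0 : 0 < E) (hE1 : E < 1) : 0 < 1 + E * cos (θ - Y) := by
  nlinarith [neg_one_le_cos (θ - Y), cos_le_one (θ - Y)]

lemma Qθ_eq (G M R P E Y θ : ℝ) (hG : 0 < G) (hM : 0 < M) (hR : 0 < R)
    (hP : 0 < P) (hE0 : 0 < E) (hE1 : E < 1) :
    Qθ G M R P E Y θ
      = (G * M / (R * P ^ 3)) * (1 + E * cos (θ - Y)) ^ 3 * (6 * cos θ * sin θ) := by
  have hden := (opE_pos E Y θ hE0 hE1).ne'
  have hd : HasDerivAt (fun t => Wpot G M R (ρel R P E Y θ) t)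
      (-(G * M * R ^ 2 / (ρel R P E Y θ) ^ 3) * (6 * cos θ * sin θ)) θ := by
    have h := ((((Real.hasDerivAt_cos θ).pow 2).const_mul (3:ℝ)).const_sub 1).const_mul
      (-(G * M * R ^ 2 / (ρel R P E Y θ) ^ 3))
    refine h.congr_deriv ?_
    push_cast
    ring
  rw [Qθ, hd.deriv, ρel]
  field_simp

lemma Qρ_eq (G M R P E Y θ : ℝ) (hG : 0 < G) (hM : 0 < M) (hR : 0 < R)
    (hP : 0 < P) (hE0 : 0 < E) (hE1 : E < 1) :
    Qρ G M R P E Y θ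
      = -(3 * G * M / (R ^ 2 * P ^ 4)) * (1 + E * cos (θ - Y)) ^ 4
          * (1 - 3 * cos θ ^ 2) := by
  have hden := (opE_pos E Y θ hE0 hE1).ne'
  have hρ : ρel R P E Y θ ≠ 0 := by
    rw [ρel]; positivity
  have hd : HasDerivAt (fun r => Wpot G M R r θ)
      (3 * (G * M * R ^ 2) / (ρel R P E Y θ) ^ 4 * (1 - 3 * cos θ ^ 2))
      (ρel R P E Y θ) := by
    have h := ((((hasDerivAt_const (ρel R P E Y θ) (G * M * R ^ 2)).div
      (hasDerivAt_pow 3 (ρel R P E Y θ)) (pow_ne_zero 3 hρ)).neg).mul_const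
      (1 - 3 * cos θ ^ 2))
    refine h.congr_deriv ?_
    push_cast
    field_simp
    ring
  rw [Qρ, hd.deriv, ρel]
  field_simp

/-- The explicit form of the equations of motion for the Kepler elements in the
polar J₂ problem. -/
theorem stmt_16 (G M R P E Y θ : ℝ)
    (hG : 0 < G) (hM : 0 < M) (hR : 0 < R)
    (hP : 0 < P) (hE0 : 0 < E) (hE1 : E < 1) :
    (4 * π * P ^ 2 / (1 + E * cos (θ - Y)) ^ 2) * (R * Qθ G M R P E Y θ / (G * M))
        = fP P E Y θ
    ∧ (2 * π * P ^ 2 * sin (θ - Y) / (1 + E * cos (θ - Y)) ^ 2) *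
          (R ^ 2 * Qρ G M R P E Y θ / (G * M))
        + π * P * (3 * E + 4 * cos (θ - Y) + E * cos (2 * θ - 2 * Y)) /
            (1 + E * cos (θ - Y)) ^ 2 * (R * Qθ G M R P E Y θ / (G * M))
        = fE P E Y θ
    ∧ -(2 * π * P ^ 2 * cos (θ - Y) / (E * (1 + E * cos (θ - Y)) ^ 2)) *
          (R ^ 2 * Qρ G M R P E Y θ / (G * M))
        + (2 * π * P * sin (θ - Y) * (2 + E * cos (θ - Y)) /
            (E * (1 + E * cos (θ - Y)) ^ 2)) * (R * Qθ G M R P E Y θ / (G * M))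
        = fY P E Y θ := by
  have hden := (opE_pos E Y θ hE0 hE1).ne'
  have hQt := Qθ_eq G M R P E Y θ hG hM hR hP hE0 hE1
  have hQr := Qρ_eq G M R P E Y θ hG hM hR hP hE0 hE1
  refine ⟨?_, ?_, ?_⟩
  · have L1 : (4 * π * P ^ 2 / (1 + E * cos (θ - Y)) ^ 2) * (R * Qθ G M R P E Y θ / (G * M))
        = (6 * π / P) * (4 * sin θ * cos θ * (1 + E * cos (θ - Y))) := by
      rw [hQt]; field_simp
    rw [L1]
    simp only [fP]
    linear_combination (6 * π / P) * trigA E Y θ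
  · have L2 : (2 * π * P ^ 2 * sin (θ - Y) / (1 + E * cos (θ - Y)) ^ 2) *
          (R ^ 2 * Qρ G M R P E Y θ / (G * M))
        + π * P * (3 * E + 4 * cos (θ - Y) + E * cos (2 * θ - 2 * Y)) /
            (1 + E * cos (θ - Y)) ^ 2 * (R * Qθ G M R P E Y θ / (G * M))
        = (3 * π / (8 * P ^ 2)) *
            (8 * (-2 * sin (θ - Y) * (1 - 3 * cos θ ^ 2) * (1 + E * cos (θ - Y)) ^ 2
              + 2 * sin θ * cos θ * (3 * E + 4 * cos (θ - Y) + E * cos (2 * θ - 2 * Y))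
                  * (1 + E * cos (θ - Y)))) := by
      rw [hQt, hQr]; field_simp; ring
    rw [L2]
    simp only [fE]
    linear_combination (3 * π / (8 * P ^ 2)) * trigB E Y θ
  · have L3 : -(2 * π * P ^ 2 * cos (θ - Y) / (E * (1 + E * cos (θ - Y)) ^ 2)) *
          (R ^ 2 * Qρ G M R P E Y θ / (G * M))
        + (2 * π * P * sin (θ - Y) * (2 + E * cos (θ - Y)) /
            (E * (1 + E * cos (θ - Y)) ^ 2)) * (R * Qθ G M R P E Y θ / (G * M))
        = (π / (8 * E * P ^ 2)) *
            (48 * cos (θ - Y) * (1 - 3 * cos θ ^ 2) * (1 + E * cos (θ - Y)) ^ 2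
              + 48 * sin (θ - Y) * (2 + E * cos (θ - Y)) * (2 * sin θ * cos θ)
                  * (1 + E * cos (θ - Y))) := by
      rw [hQt, hQr]; field_simp; ring
    rw [L3]
    simp only [fY]
    have h24 : 24 * π * E / (8 * E * P ^ 2) = 3 * π / P ^ 2 := by
      field_simp; ring
    linear_combination (π / (8 * E * P ^ 2)) * trigC E Y θ - h24
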